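/- Let G be a finite group, P and Q p-subgroups of G that are not G-conjugate, with Q normal in G and Q not contained in any conjugate of P intersected appropriately. If P ∩ Q is a proper subgroup of Q, then the Brauer-type quotient R[G/P]^{[Q]} := R[G/P]^Q / (∑_{Q'<Q} Tr_{Q'}^Q (R[G/P]^{Q'}) + π R[G/P]^Q) is zero. -/

import Mathlib

/-- The permutation representation `G →* End(H →₀ k)` as `Representation.ofMulAction` was
defined in the older Mathlib (on `H →₀ k`, via `Finsupp.lmapDomain`). -/
noncomputable def finsuppOfMulAction (k : Type*) [Semiring k] (G : Type*) [Monoid G]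
    (H : Type*) [MulAction G H] : Representation k G (H →₀ k) where
  toFun g := Finsupp.lmapDomain k k (g • ·)
  map_one' := by ext; simp
  map_mul' x y := by ext; simp [mul_smul, Finsupp.mapDomain_comp]

theorem finsuppOfMulAction_apply {k : Type*} [Semiring k] {G : Type*} [Group G]
    {H : Type*} [MulAction G H] (g : G) (f : H →₀ k) (h : H) :
    finsuppOfMulAction k G H g f h = f (g⁻¹ • h) := by
  show Finsupp.lmapDomain k k (g • ·) f h = _
  rw [Finsupp.lmapDomain_apply]
  conv_lhs => rw [← smul_inv_smul g h]
  exact Finsupp.mapDomain_apply (MulAction.injective g) f (g⁻¹ • h)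

theorem finsuppOfMulAction_single {k : Type*} [Semiring k] {G : Type*} [Group G]
    {H : Type*} [MulAction G H] (g : G) (x : H) (r : k) :
    finsuppOfMulAction k G H g (Finsupp.single x r) = Finsupp.single (g • x) r := by
  show Finsupp.lmapDomain k k (g • ·) (Finsupp.single x r) = _
  rw [Finsupp.lmapDomain_apply, Finsupp.mapDomain_single]

/-- Let `R` be a complete DVR with uniformizer `π` and residue field of
characteristic `p`, `G` a finite group, and `P, Q` `p`-subgroups of `G` that are not
`G`-conjugate, with `Q` normal in `G`.  If `P ∩ Q` is a proper subgroup of `Q`, then the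
Brauer-type quotient `R[G/P]^{[Q]} = R[G/P]^Q / (∑_{Q'<Q} Tr_{Q'}^Q R[G/P]^{Q'} + π R[G/P]^Q)`
is zero, i.e. every `Q`-fixed point of `R[G/P]` lies in the span of relative transfers from
proper subgroups of `Q` together with `π`-multiples of `Q`-fixed points. -/
theorem stmt_12 (p : ℕ) [Fact p.Prime]
    (R : Type) [CommRing R] [IsDomain R] [IsDiscreteValuationRing R]
    [IsAdicComplete (IsLocalRing.maximalIdeal R) R]
    [CharP (IsLocalRing.ResidueField R) p]
    (π : R) (hπ : Irreducible π)
    (G : Type) [Group G] [Finite G]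
    (P Q : Subgroup G) (hP : IsPGroup p P) (hQ : IsPGroup p Q) [Q.Normal]
    (hnotconj : ∀ g : G, Subgroup.map (MulAut.conj g).toMonoidHom P ≠ Q)
    (hPQ : P ⊓ Q < Q) :
    ∀ x : (G ⧸ P) →₀ R, (∀ q ∈ Q, finsuppOfMulAction R G (G ⧸ P) q x = x) →
      x ∈ Submodule.span R
        ({z : (G ⧸ P) →₀ R | ∃ Q' : Subgroup G, Q' < Q ∧
            ∃ y : (G ⧸ P) →₀ R, (∀ q ∈ Q', finsuppOfMulAction R G (G ⧸ P) q y = y) ∧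
              z = ∑ᶠ c : Q ⧸ Q'.subgroupOf Q,
                finsuppOfMulAction R G (G ⧸ P) ((Quotient.out c : Q) : G) y} ∪
         {z : (G ⧸ P) →₀ R | ∃ y : (G ⧸ P) →₀ R,
            (∀ q ∈ Q, finsuppOfMulAction R G (G ⧸ P) q y = y) ∧ z = π • y}) := by
  classical
  intro x hx
  obtain ⟨n, hn⟩ : ∃ n, x.support.card ≤ n := ⟨_, le_rfl⟩
  induction n generalizing x with
  | zero =>
    have hx0 : x = 0 := by
      rw [Nat.le_zero, Finset.card_eq_zero, Finsupp.support_eq_empty] at hn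
      exact hn
    rw [hx0]
    exact Submodule.zero_mem _
  | succ n ih =>
    by_cases hx0 : x = 0
    · rw [hx0]; exact Submodule.zero_mem _
    obtain ⟨a, ha⟩ := Finsupp.support_nonempty_iff.mpr hx0
    -- the stabilizer of `a` intersected with `Q` is proper in `Q`
    set Q' : Subgroup G := MulAction.stabilizer G a ⊓ Q with hQ'def
    have hQ'lt : Q' < Q := by
      refine lt_of_le_of_ne inf_le_right fun h => ?_
      obtain ⟨g, rfl⟩ := QuotientGroup.mk_surjective a
      have hstab : MulAction.stabilizer G ((g : G ⧸ P)) =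
          Subgroup.map (MulAut.conj g).toMonoidHom P := by
        have h1 : ((g : G ⧸ P)) = g • ((1 : G) : G ⧸ P) := by
          simp [QuotientGroup.mk_mul_of_mem]
        rw [h1, MulAction.stabilizer_smul_eq_stabilizer_map_conj,
          MulAction.stabilizer_quotient]
      have hQle : Q ≤ Subgroup.map (MulAut.conj g).toMonoidHom P := by
        rw [← hstab]
        intro q hq
        have : q ∈ Q' := h ▸ hq
        exact this.1
      have hQP : Q ≤ P := by
        intro q hq
        have hq' : g * q * g⁻¹ ∈ Q := Subgroup.Normal.conj_mem ‹Q.Normal› q hq g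
        obtain ⟨p', hp', hpq⟩ := hQle hq'
        have : p' = q := by
          have : g * p' * g⁻¹ = g * q * g⁻¹ := hpq
          group at this
          exact mul_left_cancel (mul_right_cancel this)
        exact this ▸ hp'
      exact absurd (inf_eq_right.mpr hQP) (ne_of_lt hPQ)
    set S : Subgroup Q := Q'.subgroupOf Q with hSdef
    letI : Fintype (Q ⧸ S) := Fintype.ofFinite _
    -- the coset-independence of the action on `a`
    have hkey : ∀ u v : Q, (QuotientGroup.mk u : Q ⧸ S) = QuotientGroup.mk v →
        (u : G) • a = (v : G) • a := by
      intro u v h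
      rw [QuotientGroup.eq] at h
      rw [Subgroup.mem_subgroupOf] at h
      have hfix : ((u⁻¹ * v : Q) : G) • a = a := h.1
      have : (u : G)⁻¹ • ((v : G) • a) = a := by
        rw [← mul_smul]; exact_mod_cast hfix
      calc (u : G) • a = (u : G) • ((u : G)⁻¹ • ((v : G) • a)) := by rw [this]
        _ = (v : G) • a := by rw [smul_inv_smul]
    set f : Q ⧸ S → G ⧸ P := fun c => ((Quotient.out c : Q) : G) • a with hfdef
    have hf_mk : ∀ q : Q, f (QuotientGroup.mk q) = (q : G) • a := by
      intro q
      exact hkey _ q (by rw [QuotientGroup.out_eq'])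
    have finj : Function.Injective f := by
      intro c d h
      obtain ⟨u, rfl⟩ := QuotientGroup.mk_surjective c
      obtain ⟨v, rfl⟩ := QuotientGroup.mk_surjective d
      rw [hf_mk, hf_mk] at h
      rw [QuotientGroup.eq]
      rw [Subgroup.mem_subgroupOf]
      refine ⟨?_, (u⁻¹ * v).2⟩
      show ((u⁻¹ * v : Q) : G) • a = a
      push_cast
      rw [mul_smul, ← h, inv_smul_smul]
    set Ta : (G ⧸ P) →₀ R := ∑ c : Q ⧸ S, Finsupp.single (f c) 1 with hTadef
    have hTa_spec : ∀ b : G ⧸ P, Ta b = if ∃ q : Q, (q : G) • a = b then 1 else 0 := by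
      intro b
      rw [hTadef, Finsupp.finset_sum_apply]
      by_cases hb : ∃ q : Q, (q : G) • a = b
      · obtain ⟨q, hq⟩ := hb
        rw [if_pos ⟨q, hq⟩]
        rw [Finset.sum_eq_single (QuotientGroup.mk q : Q ⧸ S)]
        · rw [hf_mk, hq, Finsupp.single_eq_same]
        · intro c _ hc
          apply Finsupp.single_eq_of_ne
          intro hcb
          exact hc (finj (by rw [← hcb, hf_mk, hq]))
        · intro h; exact absurd (Finset.mem_univ _) h
      · rw [if_neg hb]
        apply Finset.sum_eq_zero
        intro c _
        apply Finsupp.single_eq_of_ne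
        intro hcb
        exact hb ⟨Quotient.out c, hcb.symm⟩
    -- x is constant on the Q-orbit of a
    have hxc : ∀ (q : Q) (b : G ⧸ P), x ((q : G) • b) = x b := by
      intro q b
      have := congrArg (fun v : (G ⧸ P) →₀ R => v ((q : G) • b)) (hx (q : G) q.2)
      simpa [finsuppOfMulAction_apply] using this.symm
    -- Ta is Q-fixed as needed for the transfer description, and
    -- x - x a • Ta is Q-fixed
    have hTafix : ∀ q ∈ Q, finsuppOfMulAction R G (G ⧸ P) q Ta = Ta := by
      intro q hq
      ext b
      rw [finsuppOfMulAction_apply, hTa_spec, hTa_spec]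
      by_cases hb : ∃ u : Q, (u : G) • a = b
      · obtain ⟨u, hu⟩ := hb
        have h1 : ∃ u' : Q, (u' : G) • a = q⁻¹ • b :=
          ⟨(⟨q, hq⟩ : Q)⁻¹ * u, by push_cast; rw [mul_smul, hu]⟩
        rw [if_pos h1, if_pos ⟨u, hu⟩]
      · have h1 : ¬ ∃ u' : Q, (u' : G) • a = q⁻¹ • b := by
          rintro ⟨u, hu⟩
          exact hb ⟨⟨q, hq⟩ * u, by push_cast; rw [mul_smul, hu, smul_inv_smul]⟩
        rw [if_neg h1, if_neg hb]
    have hval : ∀ b, (x - x a • Ta) b = x b - x a * Ta b := by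
      intro b
      rw [Finsupp.sub_apply, Finsupp.smul_apply, smul_eq_mul]
    have horbval : ∀ b, (∃ q : Q, (q : G) • a = b) → (x - x a • Ta) b = 0 := by
      intro b hb
      obtain ⟨q, hq⟩ := hb
      rw [hval, hTa_spec, if_pos ⟨q, hq⟩, ← hq, hxc q a]
      ring
    have hsupp : (x - x a • Ta).support ⊆ x.support.erase a := by
      intro b hb
      rw [Finsupp.mem_support_iff] at hb
      by_cases horb : ∃ q : Q, (q : G) • a = b
      · exact absurd (horbval b horb) hb
      · rw [Finset.mem_erase, Finsupp.mem_support_iff]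
        constructor
        · rintro rfl; exact horb ⟨1, by simp⟩
        · intro hxb
          apply hb
          rw [hval, hTa_spec, if_neg horb, hxb]
          ring
    have hcard : (x - x a • Ta).support.card ≤ n := by
      have h1 := Finset.card_le_card hsupp
      rw [Finset.card_erase_of_mem ha] at h1
      omega
    have hfix2 : ∀ q ∈ Q, finsuppOfMulAction R G (G ⧸ P) q (x - x a • Ta)
        = x - x a • Ta := by
      intro q hq
      rw [map_sub, map_smul, hx q hq, hTafix q hq]
    have hrec := ih _ hfix2 hcard
    have hymem : Ta ∈ {z : (G ⧸ P) →₀ R | ∃ Q'' : Subgroup G, Q'' < Q ∧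
        ∃ y : (G ⧸ P) →₀ R,
          (∀ q ∈ Q'', finsuppOfMulAction R G (G ⧸ P) q y = y) ∧
          z = ∑ᶠ c : Q ⧸ Q''.subgroupOf Q,
            finsuppOfMulAction R G (G ⧸ P) ((Quotient.out c : Q) : G) y} := by
      refine ⟨Q', hQ'lt, Finsupp.single a 1, ?_, ?_⟩
      · intro q hq
        rw [finsuppOfMulAction_single]
        congr 1
        exact hq.1
      · rw [finsum_eq_sum_of_fintype]
        rw [hTadef]
        apply Finset.sum_congr rfl
        intro c _
        rw [finsuppOfMulAction_single]
    have hTamem : Ta ∈ Submodule.span R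
        ({z : (G ⧸ P) →₀ R | ∃ Q'' : Subgroup G, Q'' < Q ∧
            ∃ y : (G ⧸ P) →₀ R,
              (∀ q ∈ Q'', finsuppOfMulAction R G (G ⧸ P) q y = y) ∧
              z = ∑ᶠ c : Q ⧸ Q''.subgroupOf Q,
                finsuppOfMulAction R G (G ⧸ P) ((Quotient.out c : Q) : G) y} ∪
         {z : (G ⧸ P) →₀ R | ∃ y : (G ⧸ P) →₀ R,
            (∀ q ∈ Q, finsuppOfMulAction R G (G ⧸ P) q y = y) ∧ z = π • y}) :=
      Submodule.subset_span (Or.inl hymem)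
    have : x = (x - x a • Ta) + x a • Ta := by abel
    rw [this]
    exact Submodule.add_mem _ hrec (Submodule.smul_mem _ _ hTamem)
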